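/- Let S and T be measurable spaces and let (X₁,Y₁), (X₂,Y₂), (X₃,Y₃), (X₄,Y₄) be independent identically distributed random pairs taking values in S×T. Let k : S×S → ℝ and l : T×T → ℝ be measurable with E[k(X₁,X₂)²] < ∞ and E[l(Y₁,Y₂)²] < ∞, and let h_k and h_l be the corresponding doubly centered kernels. Then for any index pairs {s,t} and {u,v} in {1,2,3,4} with s ≠ t, u ≠ v and {s,t} ≠ {u,v}, one has E[h_k(X_s,X_t)·h_l(Y_u,Y_v)] = 0. -/

import Mathlib

open MeasureTheory ProbabilityTheory

/-- Centering in the first variable: the doubly centered kernel integrates to zero. -/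
lemma aux_center_left {α : Type*} [MeasurableSpace α] (ρ : Measure α) [IsProbabilityMeasure ρ]
    (k : α → α → ℝ) (hint : Integrable (fun p : α × α => k p.1 p.2) (ρ.prod ρ)) (b : α) :
    ∫ a, (k a b - (∫ x, k a x ∂ρ) - (∫ x, k x b ∂ρ)
      + ∫ p : α × α, k p.1 p.2 ∂(ρ.prod ρ)) ∂ρ = 0 := by
  have hc1 : Integrable (fun a => ∫ x, k a x ∂ρ) ρ := hint.integral_prod_left
  have hMeq : (∫ p : α × α, k p.1 p.2 ∂(ρ.prod ρ)) = ∫ a, ∫ x, k a x ∂ρ ∂ρ :=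
    integral_prod _ hint
  by_cases hb : Integrable (fun a => k a b) ρ
  · set C := ∫ x, k x b ∂ρ with hC
    set M := ∫ p : α × α, k p.1 p.2 ∂(ρ.prod ρ) with hM
    have I2 : Integrable (fun a => k a b - (∫ x, k a x ∂ρ)) ρ := hb.sub hc1
    have I1 : Integrable (fun a => k a b - (∫ x, k a x ∂ρ) - C) ρ := I2.sub (integrable_const _)
    have E1 : ∫ a, (k a b - (∫ x, k a x ∂ρ) - C + M) ∂ρ
        = (∫ a, (k a b - (∫ x, k a x ∂ρ) - C) ∂ρ) + ∫ _, M ∂ρ :=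
      integral_add I1 (integrable_const _)
    have E2 : ∫ a, (k a b - (∫ x, k a x ∂ρ) - C) ∂ρ
        = (∫ a, (k a b - (∫ x, k a x ∂ρ)) ∂ρ) - ∫ _, C ∂ρ :=
      integral_sub I2 (integrable_const _)
    have E3 : ∫ a, (k a b - (∫ x, k a x ∂ρ)) ∂ρ
        = (∫ a, k a b ∂ρ) - ∫ a, ∫ x, k a x ∂ρ ∂ρ :=
      integral_sub hb hc1
    have EC : ∫ _, C ∂ρ = C := by simp
    have EM : ∫ _, M ∂ρ = M := by simp
    rw [E1, E2, E3, EC, EM]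
    have : (∫ a, k a b ∂ρ) = C := rfl
    rw [this, ← hMeq]
    ring
  · refine integral_undef fun h => hb ?_
    have heq : (fun a => k a b) = fun a =>
        ((k a b - (∫ x, k a x ∂ρ) - (∫ x, k x b ∂ρ)
          + ∫ p : α × α, k p.1 p.2 ∂(ρ.prod ρ)) + (∫ x, k a x ∂ρ))
        + ((∫ x, k x b ∂ρ) - ∫ p : α × α, k p.1 p.2 ∂(ρ.prod ρ)) := by
      funext a; ring
    rw [heq]
    exact (h.add hc1).add (integrable_const _)

lemma aux_center_right {α : Type*} [MeasurableSpace α] (ρ : Measure α) [IsProbabilityMeasure ρ]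
    (k : α → α → ℝ) (hint : Integrable (fun p : α × α => k p.1 p.2) (ρ.prod ρ)) (a : α) :
    ∫ b, (k a b - (∫ x, k a x ∂ρ) - (∫ x, k x b ∂ρ)
      + ∫ p : α × α, k p.1 p.2 ∂(ρ.prod ρ)) ∂ρ = 0 := by
  have hint' : Integrable (fun p : α × α => k p.2 p.1) (ρ.prod ρ) := hint.swap
  have hswap : (∫ p : α × α, k p.2 p.1 ∂(ρ.prod ρ)) = ∫ p : α × α, k p.1 p.2 ∂(ρ.prod ρ) :=
    integral_prod_swap (fun p : α × α => k p.1 p.2)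
  have h := aux_center_left ρ (fun x y => k y x) hint' a
  rw [← h]
  refine integral_congr_ae (Filter.Eventually.of_forall fun b => ?_)
  simp only
  rw [hswap]
  ring

lemma aux_master {Ω α γ : Type*} [MeasurableSpace Ω] [MeasurableSpace α] [MeasurableSpace γ]
    (μ : Measure Ω) [IsProbabilityMeasure μ] (ρ : Measure α)
    (V : Ω → α) (W : Ω → γ) (hV : Measurable V) (hW : Measurable W)
    (hVW : IndepFun V W μ) (hlaw : μ.map V = ρ)
    (f : α → γ → ℝ) (hf : Measurable fun p : γ × α => f p.2 p.1)
    (hzero : ∀ c, ∫ x, f x c ∂ρ = 0) :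
    ∫ ω, f (V ω) (W ω) ∂μ = 0 := by
  haveI : IsProbabilityMeasure (μ.map W) := Measure.isProbabilityMeasure_map hW.aemeasurable
  haveI : IsProbabilityMeasure ρ := hlaw ▸ Measure.isProbabilityMeasure_map hV.aemeasurable
  have hmap : μ.map (fun ω => (W ω, V ω)) = (μ.map W).prod ρ := by
    rw [← hlaw]
    exact (indepFun_iff_map_prod_eq_prod_map_map hW.aemeasurable hV.aemeasurable).mp hVW.symm
  have h1 : ∫ ω, f (V ω) (W ω) ∂μ
      = ∫ p : γ × α, f p.2 p.1 ∂(μ.map (fun ω => (W ω, V ω))) :=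
    (integral_map (hW.prodMk hV).aemeasurable hf.aestronglyMeasurable).symm
  rw [h1, hmap]
  by_cases hInt : Integrable (fun p : γ × α => f p.2 p.1) ((μ.map W).prod ρ)
  · rw [integral_prod _ hInt]
    simp [hzero]
  · exact integral_undef hInt

lemma aux_indep {ι β Ω : Type*} [DecidableEq ι] [mβ : MeasurableSpace β]
    [MeasurableSpace Ω] {μ : Measure Ω} {f : ι → Ω → β}
    (hindep : iIndepFun f μ) (hm : ∀ i, Measurable (f i))
    (s t u v : ι) (h1 : s ≠ t) (h2 : s ≠ u) (h3 : s ≠ v) :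
    IndepFun (f s) (fun ω => (f t ω, f u ω, f v ω)) μ := by
  have hd : Disjoint ({s} : Finset ι) {t, u, v} := by
    simp only [Finset.disjoint_left, Finset.mem_singleton, Finset.mem_insert]
    rintro a rfl
    simp [h1, h2, h3]
  have h := hindep.indepFun_finset {s} {t, u, v} hd hm
  have ht : t ∈ ({t, u, v} : Finset ι) := by simp
  have hu : u ∈ ({t, u, v} : Finset ι) := by simp
  have hv : v ∈ ({t, u, v} : Finset ι) := by simp
  have hs : s ∈ ({s} : Finset ι) := by simp
  exact h.comp (φ := fun g : ({s} : Finset ι) → β => g ⟨s, hs⟩)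
    (ψ := fun g : ({t, u, v} : Finset ι) → β => (g ⟨t, ht⟩, g ⟨u, hu⟩, g ⟨v, hv⟩))
    (measurable_pi_apply _)
    ((measurable_pi_apply _).prodMk ((measurable_pi_apply _).prodMk (measurable_pi_apply _)))

theorem doublyCentered_uncorrelated
    {Ω S T : Type*} [MeasurableSpace Ω] [MeasurableSpace S] [MeasurableSpace T]
    (μ : Measure Ω) [IsProbabilityMeasure μ]
    (X : Fin 4 → Ω → S) (Y : Fin 4 → Ω → T)
    (hmeas : ∀ s, Measurable (fun ω => (X s ω, Y s ω)))
    (hindep : iIndepFun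
      (fun s ω => (X s ω, Y s ω)) μ)
    (hident : ∀ s, Measure.map (fun ω => (X s ω, Y s ω)) μ =
      Measure.map (fun ω => (X 0 ω, Y 0 ω)) μ)
    (k : S → S → ℝ) (l : T → T → ℝ)
    (hkmeas : Measurable fun p : S × S => k p.1 p.2)
    (hlmeas : Measurable fun p : T × T => l p.1 p.2)
    (hk2 : Integrable (fun ω => (k (X 0 ω) (X 1 ω)) ^ 2) μ)
    (hl2 : Integrable (fun ω => (l (Y 0 ω) (Y 1 ω)) ^ 2) μ)
    (hk : S → S → ℝ) (hlT : T → T → ℝ)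
    (hhk : ∀ a b, hk a b = k a b - (∫ ω, k a (X 0 ω) ∂μ) - (∫ ω, k (X 0 ω) b ∂μ)
      + ∫ ω, k (X 0 ω) (X 1 ω) ∂μ)
    (hhl : ∀ a b, hlT a b = l a b - (∫ ω, l a (Y 0 ω) ∂μ) - (∫ ω, l (Y 0 ω) b ∂μ)
      + ∫ ω, l (Y 0 ω) (Y 1 ω) ∂μ) :
    ∀ s t u v : Fin 4, s ≠ t → u ≠ v → ({s, t} : Finset (Fin 4)) ≠ {u, v} →
      ∫ ω, hk (X s ω) (X t ω) * hlT (Y u ω) (Y v ω) ∂μ = 0 := by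
  -- measurability of the components
  have hXmeas : ∀ i, Measurable (X i) := fun i => measurable_fst.comp (hmeas i)
  have hYmeas : ∀ i, Measurable (Y i) := fun i => measurable_snd.comp (hmeas i)
  -- the common laws
  set νS : Measure S := μ.map (X 0) with hνS
  set νT : Measure T := μ.map (Y 0) with hνT
  haveI : IsProbabilityMeasure νS := Measure.isProbabilityMeasure_map (hXmeas 0).aemeasurable
  haveI : IsProbabilityMeasure νT := Measure.isProbabilityMeasure_map (hYmeas 0).aemeasurable
  have lawX : ∀ i, μ.map (X i) = νS := by
    intro i
    have h1 : (μ.map (fun ω => (X i ω, Y i ω))).map Prod.fst = μ.map (X i) :=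
      Measure.map_map measurable_fst (hmeas i)
    have h0 : (μ.map (fun ω => (X 0 ω, Y 0 ω))).map Prod.fst = μ.map (X 0) :=
      Measure.map_map measurable_fst (hmeas 0)
    rw [hνS, ← h1, hident i, h0]
  have lawY : ∀ i, μ.map (Y i) = νT := by
    intro i
    have h1 : (μ.map (fun ω => (X i ω, Y i ω))).map Prod.snd = μ.map (Y i) :=
      Measure.map_map measurable_snd (hmeas i)
    have h0 : (μ.map (fun ω => (X 0 ω, Y 0 ω))).map Prod.snd = μ.map (Y 0) :=
      Measure.map_map measurable_snd (hmeas 0)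
    rw [hνT, ← h1, hident i, h0]
  -- law of the pair (X 0, X 1)
  have hindep01 : IndepFun (X 0) (X 1) μ :=
    (hindep.indepFun (show (0 : Fin 4) ≠ 1 by decide)).comp measurable_fst measurable_fst
  have lawPair : μ.map (fun ω => (X 0 ω, X 1 ω)) = νS.prod νS := by
    rw [(indepFun_iff_map_prod_eq_prod_map_map (hXmeas 0).aemeasurable
      (hXmeas 1).aemeasurable).mp hindep01, lawX 0, lawX 1]
  -- integrability of k with respect to νS ⊗ νS
  have hk2' : Integrable (fun p : S × S => (k p.1 p.2) ^ 2) (νS.prod νS) := by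
    rw [← lawPair]
    rw [integrable_map_measure (hkmeas.pow_const 2).aestronglyMeasurable
      ((hXmeas 0).prodMk (hXmeas 1)).aemeasurable]
    exact hk2
  have hkint : Integrable (fun p : S × S => k p.1 p.2) (νS.prod νS) := by
    refine (hk2'.add (integrable_const 1)).mono' hkmeas.aestronglyMeasurable ?_
    refine Filter.Eventually.of_forall fun p => ?_
    show ‖k p.1 p.2‖ ≤ (k p.1 p.2) ^ 2 + 1
    rw [Real.norm_eq_abs]
    nlinarith [sq_nonneg (|k p.1 p.2| - 1), abs_nonneg (k p.1 p.2), sq_abs (k p.1 p.2)]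
  -- rewriting the centered kernels with respect to the laws
  have fct1 : ∀ a, (∫ ω, k a (X 0 ω) ∂μ) = ∫ x, k a x ∂νS := fun a =>
    (integral_map (hXmeas 0).aemeasurable
      (hkmeas.comp measurable_prodMk_left).aestronglyMeasurable).symm
  have fct2 : ∀ b, (∫ ω, k (X 0 ω) b ∂μ) = ∫ x, k x b ∂νS := fun b =>
    (integral_map (hXmeas 0).aemeasurable
      (hkmeas.comp measurable_prodMk_right).aestronglyMeasurable).symm
  have fct3 : (∫ ω, k (X 0 ω) (X 1 ω) ∂μ) = ∫ p : S × S, k p.1 p.2 ∂(νS.prod νS) := by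
    rw [← lawPair,
      integral_map ((hXmeas 0).prodMk (hXmeas 1)).aemeasurable hkmeas.aestronglyMeasurable]
  have fl1 : ∀ a, (∫ ω, l a (Y 0 ω) ∂μ) = ∫ x, l a x ∂νT := fun a =>
    (integral_map (hYmeas 0).aemeasurable
      (hlmeas.comp measurable_prodMk_left).aestronglyMeasurable).symm
  have fl2 : ∀ b, (∫ ω, l (Y 0 ω) b ∂μ) = ∫ x, l x b ∂νT := fun b =>
    (integral_map (hYmeas 0).aemeasurable
      (hlmeas.comp measurable_prodMk_right).aestronglyMeasurable).symm
  have hhk' : ∀ a b, hk a b = k a b - (∫ x, k a x ∂νS) - (∫ x, k x b ∂νS)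
      + ∫ p : S × S, k p.1 p.2 ∂(νS.prod νS) := fun a b => by
    rw [hhk a b, fct1, fct2, fct3]
  -- measurability of the centered kernels
  have hkm : Measurable (fun p : S × S => hk p.1 p.2) := by
    have h1 : Measurable fun a => ∫ x, k a x ∂νS :=
      hkmeas.stronglyMeasurable.integral_prod_right'.measurable
    have h2 : Measurable fun b => ∫ x, k x b ∂νS :=
      (hkmeas.comp measurable_swap).stronglyMeasurable.integral_prod_right'.measurable
    simp only [hhk']
    exact ((hkmeas.sub (h1.comp measurable_fst)).sub (h2.comp measurable_snd)).add
      measurable_const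
  have hlm : Measurable (fun p : T × T => hlT p.1 p.2) := by
    have h1 : Measurable fun a => ∫ x, l a x ∂νT :=
      hlmeas.stronglyMeasurable.integral_prod_right'.measurable
    have h2 : Measurable fun b => ∫ x, l x b ∂νT :=
      (hlmeas.comp measurable_swap).stronglyMeasurable.integral_prod_right'.measurable
    have hhl' : ∀ a b, hlT a b = l a b - (∫ x, l a x ∂νT) - (∫ x, l x b ∂νT)
        + ∫ ω, l (Y 0 ω) (Y 1 ω) ∂μ := fun a b => by rw [hhl a b, fl1, fl2]
    simp only [hhl']
    exact ((hlmeas.sub (h1.comp measurable_fst)).sub (h2.comp measurable_snd)).add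
      measurable_const
  -- centering identities
  have key1 : ∀ b, ∫ a, hk a b ∂νS = 0 := fun b => by
    simp only [hhk']; exact aux_center_left νS k hkint b
  have key2 : ∀ a, ∫ b, hk a b ∂νS = 0 := fun a => by
    simp only [hhk']; exact aux_center_right νS k hkint a
  -- Claim A: the first index of the `hk` factor is free
  have claimA : ∀ s t u v : Fin 4, s ≠ t → s ≠ u → s ≠ v →
      ∫ ω, hk (X s ω) (X t ω) * hlT (Y u ω) (Y v ω) ∂μ = 0 := by
    intro s t u v h1 h2 h3
    have hZindep := aux_indep hindep hmeas s t u v h1 h2 h3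
    have hIndep : IndepFun (X s) (fun ω => (X t ω, Y u ω, Y v ω)) μ :=
      hZindep.comp measurable_fst
        ((measurable_fst.comp measurable_fst).prodMk
          ((measurable_snd.comp (measurable_fst.comp measurable_snd)).prodMk
            (measurable_snd.comp (measurable_snd.comp measurable_snd))))
    exact aux_master μ νS (X s) (fun ω => (X t ω, Y u ω, Y v ω)) (hXmeas s)
      ((hXmeas t).prodMk ((hYmeas u).prodMk (hYmeas v))) hIndep (lawX s)
      (fun x c => hk x c.1 * hlT c.2.1 c.2.2)
      ((hkm.comp (measurable_snd.prodMk (measurable_fst.comp measurable_fst))).mul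
        (hlm.comp ((measurable_fst.comp (measurable_snd.comp measurable_fst)).prodMk
          (measurable_snd.comp (measurable_snd.comp measurable_fst)))))
      (fun c => by rw [integral_mul_const, key1 c.1, zero_mul])
  -- Claim B: the second index of the `hk` factor is free
  have claimB : ∀ s t u v : Fin 4, t ≠ s → t ≠ u → t ≠ v →
      ∫ ω, hk (X s ω) (X t ω) * hlT (Y u ω) (Y v ω) ∂μ = 0 := by
    intro s t u v h1 h2 h3
    have hZindep := aux_indep hindep hmeas t s u v h1 h2 h3
    have hIndep : IndepFun (X t) (fun ω => (X s ω, Y u ω, Y v ω)) μ :=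
      hZindep.comp measurable_fst
        ((measurable_fst.comp measurable_fst).prodMk
          ((measurable_snd.comp (measurable_fst.comp measurable_snd)).prodMk
            (measurable_snd.comp (measurable_snd.comp measurable_snd))))
    exact aux_master μ νS (X t) (fun ω => (X s ω, Y u ω, Y v ω)) (hXmeas t)
      ((hXmeas s).prodMk ((hYmeas u).prodMk (hYmeas v))) hIndep (lawX t)
      (fun x c => hk c.1 x * hlT c.2.1 c.2.2)
      ((hkm.comp ((measurable_fst.comp measurable_fst).prodMk measurable_snd)).mul
        (hlm.comp ((measurable_fst.comp (measurable_snd.comp measurable_fst)).prodMk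
          (measurable_snd.comp (measurable_snd.comp measurable_fst)))))
      (fun c => by rw [integral_mul_const, key2 c.1, zero_mul])
  -- now the case analysis
  intro s t u v hst huv hset
  by_cases hsu : s = u
  · subst hsu
    have htv : t ≠ v := fun h => hset (by rw [h])
    exact claimB s t s v hst.symm hst.symm htv
  · by_cases hsv : s = v
    · subst hsv
      have htu : t ≠ u := fun h => hset (by rw [h]; exact Finset.pair_comm s u)
      exact claimB s t u s hst.symm htu hst.symm
    · exact claimA s t u v hst hsu hsv
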